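/- Let K ≥ 1 and c > 0 be real numbers, let s < s′ be integers, let s̃ := ⌈(s + s′)/2⌉, and let d_s, d_{s+1}, …, d_{s′} be real numbers satisfying: (a) Σ_{t=s}^{s′} d_t ≥ c·√(K·(s′ − s)), and (b) Σ_{t=s}^{s̃−1} d_t ≤ c·√(K·(s̃ − 1 − s)). Then Σ_{t=s̃}^{s′} d_t ≥ (c/4)·√(K·(s′ − s̃)). -/
import Mathlib


/-- Lemma 9 of the paper: if `Σ_{t=s}^{s'} d t ≥ c·√(K·(s'−s))` while the
sum up to just before the midpoint `smid = ⌈(s+s')/2⌉` satisfies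
`Σ_{t=s}^{smid−1} d t ≤ c·√(K·(smid−1−s))`, then `Σ_{t=smid}^{s'} d t ≥ (c/4)·√(K·(s'−smid))`. -/
theorem detect_lemma
    (K c : ℝ) (hK : 1 ≤ K) (hc : 0 < c)
    (s s' smid : ℤ) (hss : s < s')
    (hmid : smid = ⌈((s : ℚ) + (s' : ℚ)) / 2⌉)
    (d : ℤ → ℝ)
    (ha : c * Real.sqrt (K * ((s' - s : ℤ) : ℝ)) ≤ ∑ t ∈ Finset.Icc s s', d t)
    (hb : ∑ t ∈ Finset.Icc s (smid - 1), d t ≤ c * Real.sqrt (K * ((smid - 1 - s : ℤ) : ℝ))) :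
    (c / 4) * Real.sqrt (K * ((s' - smid : ℤ) : ℝ)) ≤ ∑ t ∈ Finset.Icc smid s', d t := by
  have hssQ : (s : ℚ) < (s' : ℚ) := by exact_mod_cast hss
  have h1Q : (s : ℚ) + s' ≤ 2 * smid := by
    have := Int.le_ceil (((s : ℚ) + (s' : ℚ)) / 2)
    rw [← hmid] at this
    linarith
  have h1 : s + s' ≤ 2 * smid := by exact_mod_cast h1Q
  have h1bQ : (2:ℚ) * smid < (s : ℚ) + s' + 2 := by
    have := Int.ceil_lt_add_one (((s : ℚ) + (s' : ℚ)) / 2)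
    rw [← hmid] at this
    linarith
  have h1b : 2 * smid ≤ s + s' + 1 := by
    have : 2 * smid < s + s' + 2 := by exact_mod_cast h1bQ
    omega
  have h2 : smid ≤ s' := by
    rw [hmid, Int.ceil_le]; linarith
  have h3 : s < smid := by
    rw [hmid, Int.lt_ceil]; linarith
  -- split the sum
  have hsplit : (∑ t ∈ Finset.Icc s (smid - 1), d t) + ∑ t ∈ Finset.Icc smid s', d t
      = ∑ t ∈ Finset.Icc s s', d t := by
    rw [← Finset.sum_union]
    · congr 1
      ext t
      simp only [Finset.mem_union, Finset.mem_Icc]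
      omega
    · rw [Finset.disjoint_left]
      intro t ht ht'
      simp only [Finset.mem_Icc] at ht ht'
      omega
  set u := Real.sqrt (K * ((smid - 1 - s : ℤ) : ℝ)) with hu
  set v := Real.sqrt (K * ((s' - s : ℤ) : ℝ)) with hv
  set w := Real.sqrt (K * ((s' - smid : ℤ) : ℝ)) with hw
  have hK0 : (0:ℝ) < K := lt_of_lt_of_le one_pos hK
  have hA : (0:ℝ) ≤ K * ((smid - 1 - s : ℤ) : ℝ) := by
    apply mul_nonneg hK0.le
    exact_mod_cast (show (0:ℤ) ≤ smid - 1 - s by omega)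
  have hC : (0:ℝ) ≤ K * ((s' - smid : ℤ) : ℝ) := by
    apply mul_nonneg hK0.le
    exact_mod_cast (show (0:ℤ) ≤ s' - smid by omega)
  have hu2 : u ^ 2 = K * ((smid - 1 - s : ℤ) : ℝ) := Real.sq_sqrt hA
  have hw2 : w ^ 2 = K * ((s' - smid : ℤ) : ℝ) := Real.sq_sqrt hC
  have hv2 : v ^ 2 = K * ((s' - s : ℤ) : ℝ) := Real.sq_sqrt (by
    apply mul_nonneg hK0.le
    exact_mod_cast (show (0:ℤ) ≤ s' - s by omega))
  have hBsum : (((s' - s : ℤ) : ℝ)) = ((smid - 1 - s : ℤ) : ℝ) + ((s' - smid : ℤ) : ℝ) + 1 := by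
    push_cast; ring
  have huw : u ≤ w := by
    apply Real.sqrt_le_sqrt
    apply mul_le_mul_of_nonneg_left _ hK0.le
    exact_mod_cast (show smid - 1 - s ≤ s' - smid by omega)
  have hu0 : 0 ≤ u := Real.sqrt_nonneg _
  have hw0 : 0 ≤ w := Real.sqrt_nonneg _
  have hv0 : 0 ≤ v := Real.sqrt_nonneg _
  have hkey : u + w / 4 ≤ v := by
    nlinarith [sq_nonneg (u - w), sq_nonneg (v - u - w / 4), sq_nonneg w]
  nlinarith [hkey, hc, hsplit, ha, hb]
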